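/- For fixed k ≥ 0 and n ≥ k+1, the counts D_{2n+1}^{=n+k} = |{σ ∈ DU_{2n+1} : mmp^{(1,0,0,0)}(σ) = n+k}| satisfy D_{2n+1}^{=n+k} = Σ_{j=0}^{k} C(2n, 2j) · A_{2j}(1) · A_{2(n-j)}^{=(n-j)+(k-j)}, where A_{2j}(1) = |UD_{2j}| (with A_0(1) = 1) and A_{2m}^{=m+s} = |{σ ∈ UD_{2m} : mmp^{(1,0,0,0)}(σ) = m+s}|. -/

import Mathlib

open Finset

/-- Number of indices `i` such that there exists `j > i` with `σ j > σ i`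
    (the statistic mmp^{(1,0,0,0)}). -/
noncomputable def mmp1000 {n : ℕ} (σ : Equiv.Perm (Fin n)) : ℕ :=
  (Finset.univ.filter (fun i : Fin n => ∃ j : Fin n, i < j ∧ σ i < σ j)).card

/-- Number of indices `i` such that there exists `j < i` with `σ j > σ i`
    (the statistic mmp^{(0,1,0,0)}). -/
noncomputable def mmp0100 {n : ℕ} (σ : Equiv.Perm (Fin n)) : ℕ :=
  (Finset.univ.filter (fun i : Fin n => ∃ j : Fin n, j < i ∧ σ i < σ j)).card

/-- Number of indices `i` such that there exists `j > i` with `σ j < σ i`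
    (the statistic mmp^{(0,0,0,1)}). -/
noncomputable def mmp0001 {n : ℕ} (σ : Equiv.Perm (Fin n)) : ℕ :=
  (Finset.univ.filter (fun i : Fin n => ∃ j : Fin n, i < j ∧ σ j < σ i)).card

/-- σ is up-down: σ(1) < σ(2) > σ(3) < σ(4) > ⋯ (0-indexed: ascent at even indices). -/
def IsUpDown {n : ℕ} (σ : Equiv.Perm (Fin n)) : Prop :=
  ∀ i : Fin n, ∀ h : (i : ℕ) + 1 < n,
    if (i : ℕ) % 2 = 0 then σ i < σ ⟨(i : ℕ) + 1, h⟩ else σ ⟨(i : ℕ) + 1, h⟩ < σ i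

/-- σ is down-up: σ(1) > σ(2) < σ(3) > σ(4) < ⋯ (0-indexed: descent at even indices). -/
def IsDownUp {n : ℕ} (σ : Equiv.Perm (Fin n)) : Prop :=
  ∀ i : Fin n, ∀ h : (i : ℕ) + 1 < n,
    if (i : ℕ) % 2 = 0 then σ ⟨(i : ℕ) + 1, h⟩ < σ i else σ i < σ ⟨(i : ℕ) + 1, h⟩

open scoped Classical in
/-- The set of up-down permutations of length `m`. -/
noncomputable def UDset (m : ℕ) : Finset (Equiv.Perm (Fin m)) :=
  Finset.univ.filter (fun σ => IsUpDown σ)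

open scoped Classical in
/-- The set of down-up permutations of length `m`. -/
noncomputable def DUset (m : ℕ) : Finset (Equiv.Perm (Fin m)) :=
  Finset.univ.filter (fun σ => IsDownUp σ)

/-- The reverse of σ: σ^r(i) = σ(n+1-i). -/
def permReverse {n : ℕ} (σ : Equiv.Perm (Fin n)) : Equiv.Perm (Fin n) :=
  Fin.revPerm.trans σ

/-- The complement of σ: σ^c(i) = n+1-σ(i). -/
def permComplement {n : ℕ} (σ : Equiv.Perm (Fin n)) : Equiv.Perm (Fin n) :=
  σ.trans Fin.revPerm

/-- A_{2n}(x) = Σ_{σ ∈ UD_{2n}} x^{mmp^{(1,0,0,0)}(σ)}. -/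
noncomputable def Apoly (n : ℕ) (x : ℤ) : ℤ :=
  ∑ σ ∈ UDset (2 * n), x ^ mmp1000 σ

/-- B_{2n+1}(x) = Σ_{σ ∈ UD_{2n+1}} x^{mmp^{(1,0,0,0)}(σ)}. -/
noncomputable def Bpoly (n : ℕ) (x : ℤ) : ℤ :=
  ∑ σ ∈ UDset (2 * n + 1), x ^ mmp1000 σ

/-- C_{2n}(x) = Σ_{σ ∈ DU_{2n}} x^{mmp^{(1,0,0,0)}(σ)}. -/
noncomputable def Cpoly (n : ℕ) (x : ℤ) : ℤ :=
  ∑ σ ∈ DUset (2 * n), x ^ mmp1000 σ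

/-- D_{2n+1}(x) = Σ_{σ ∈ DU_{2n+1}} x^{mmp^{(1,0,0,0)}(σ)}. -/
noncomputable def Dpoly (n : ℕ) (x : ℤ) : ℤ :=
  ∑ σ ∈ DUset (2 * n + 1), x ^ mmp1000 σ

/-- Number of up-down permutations of length m. -/
noncomputable def udCount (m : ℕ) : ℕ := (UDset m).card

/-- Number of down-up permutations of length m. -/
noncomputable def duCount (m : ℕ) : ℕ := (DUset m).card

open scoped Classical in
/-- |{σ ∈ UD_{2m} : mmp^{(1,0,0,0)}(σ) = c}|. -/
noncomputable def AcountEq (m c : ℕ) : ℕ :=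
  ((UDset (2 * m)).filter (fun σ => mmp1000 σ = c)).card

open scoped Classical in
/-- |{σ ∈ DU_{2m+1} : mmp^{(1,0,0,0)}(σ) = c}|. -/
noncomputable def DcountEq (m c : ℕ) : ℕ :=
  ((DUset (2 * m + 1)).filter (fun σ => mmp1000 σ = c)).card

open scoped Classical in
/-- |{σ ∈ UD_{2m+1} : mmp^{(1,0,0,0)}(σ) = c}|. -/
noncomputable def BcountEq (m c : ℕ) : ℕ :=
  ((UDset (2 * m + 1)).filter (fun σ => mmp1000 σ = c)).card

open scoped Classical in
/-- |{σ ∈ DU_{2m} : mmp^{(1,0,0,0)}(σ) = c}|. -/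
noncomputable def CcountEq (m c : ℕ) : ℕ :=
  ((DUset (2 * m)).filter (fun σ => mmp1000 σ = c)).card


lemma perm_eq_of_lt_iff {m : ℕ} (π π' : Equiv.Perm (Fin m))
    (h : ∀ a b, π a < π b ↔ π' a < π' b) : π = π' := by
  have hmono : StrictMono (fun x => π' (π.symm x)) := by
    intro x y hxy
    exact (h (π.symm x) (π.symm y)).mp (by simpa using hxy)
  have hid : (fun x => π' (π.symm x)) = id := by
    apply (StrictMono.range_inj hmono strictMono_id).mp
    have : Function.Surjective (fun x => π' (π.symm x)) :=
      π'.surjective.comp π.symm.surjective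
    rw [this.range_eq, Set.range_id]
  ext a
  have h2 := congrFun hid (π a)
  simp at h2
  exact congrArg Fin.val h2.symm

lemma image_card_of_inj {m N : ℕ} (w : Fin m → Fin N) (hw : Function.Injective w) :
    (Finset.univ.image w).card = m := by
  rw [Finset.card_image_of_injective _ hw, Finset.card_univ, Fintype.card_fin]

noncomputable def mkPatternFun {m N : ℕ} (w : Fin m → Fin N) (hw : Function.Injective w) :
    Fin m → Fin m := fun i =>
  ((Finset.univ.image w).orderIsoOfFin (image_card_of_inj w hw)).symm
    ⟨w i, Finset.mem_image_of_mem w (Finset.mem_univ i)⟩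

lemma mkPatternFun_inj {m N : ℕ} (w : Fin m → Fin N) (hw : Function.Injective w) :
    Function.Injective (mkPatternFun w hw) := by
  intro a b hab
  apply hw
  have := congrArg (fun x => (((Finset.univ.image w).orderIsoOfFin (image_card_of_inj w hw)) x : Fin N)) hab
  simpa [mkPatternFun] using this

noncomputable def mkPattern {m N : ℕ} (w : Fin m → Fin N) (hw : Function.Injective w) :
    Equiv.Perm (Fin m) :=
  Equiv.ofBijective (mkPatternFun w hw)
    (Finite.injective_iff_bijective.mp (mkPatternFun_inj w hw))

lemma mkPattern_lt_iff {m N : ℕ} (w : Fin m → Fin N) (hw : Function.Injective w) (a b : Fin m) :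
    mkPattern w hw a < mkPattern w hw b ↔ w a < w b := by
  show mkPatternFun w hw a < mkPatternFun w hw b ↔ _
  rw [mkPatternFun, mkPatternFun, (((Finset.univ.image w).orderIsoOfFin (image_card_of_inj w hw)).symm).lt_iff_lt]
  exact Subtype.mk_lt_mk

lemma mkPattern_eval {m N : ℕ} (w : Fin m → Fin N) (hw : Function.Injective w) (i : Fin m) :
    (((Finset.univ.image w).orderIsoOfFin (image_card_of_inj w hw)) (mkPattern w hw i) : Fin N) = w i := by
  show (((Finset.univ.image w).orderIsoOfFin (image_card_of_inj w hw)) (mkPatternFun w hw i) : Fin N) = w i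
  rw [mkPatternFun, OrderIso.apply_symm_apply]

lemma orderIsoOfFin_congr {α : Type*} [LinearOrder α] {m : ℕ} {A B : Finset α}
    (hA : A.card = m) (hB : B.card = m) (hAB : A = B) (x : Fin m) :
    (A.orderIsoOfFin hA x : α) = B.orderIsoOfFin hB x := by subst hAB; rfl
-- nat-index reformulations
lemma isDownUp_nat {m : ℕ} (σ : Equiv.Perm (Fin m)) : IsDownUp σ ↔
    ∀ i : ℕ, ∀ h1 : i + 1 < m,
      if i % 2 = 0 then σ ⟨i+1, h1⟩ < σ ⟨i, Nat.lt_of_succ_lt h1⟩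
      else σ ⟨i, Nat.lt_of_succ_lt h1⟩ < σ ⟨i+1, h1⟩ := by
  constructor
  · intro h i h1; exact h ⟨i, Nat.lt_of_succ_lt h1⟩ h1
  · intro h i h1; exact h i.val h1

lemma isUpDown_nat {m : ℕ} (σ : Equiv.Perm (Fin m)) : IsUpDown σ ↔
    ∀ i : ℕ, ∀ h1 : i + 1 < m,
      if i % 2 = 0 then σ ⟨i, Nat.lt_of_succ_lt h1⟩ < σ ⟨i+1, h1⟩
      else σ ⟨i+1, h1⟩ < σ ⟨i, Nat.lt_of_succ_lt h1⟩ := by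
  constructor
  · intro h i h1; exact h ⟨i, Nat.lt_of_succ_lt h1⟩ h1
  · intro h i h1; exact h i.val h1

section Split

variable {n j : ℕ}

def emb1 (hj : j ≤ n) (a : Fin (2*j)) : Fin (2*n+1) := ⟨a.val, by have := a.isLt; omega⟩
def emb2 (hj : j ≤ n) (a : Fin (2*(n-j))) : Fin (2*n+1) := ⟨2*j+1+a.val, by have := a.isLt; omega⟩
def pivot (hj : j ≤ n) : Fin (2*n+1) := ⟨2*j, by omega⟩

lemma sigma_lt_last (hj : j ≤ n) (σ : Equiv.Perm (Fin (2*n+1)))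
    (hσ : σ (pivot hj) = Fin.last (2*n)) (x : Fin (2*n+1)) (hx : x ≠ pivot hj) :
    σ x < Fin.last (2*n) :=
  lt_of_le_of_ne (Fin.le_last _) (fun h => hx (σ.injective (h.trans hσ.symm)))

lemma du_split (hj : j ≤ n) (σ : Equiv.Perm (Fin (2*n+1)))
    (hσ : σ (pivot hj) = Fin.last (2*n))
    (α : Equiv.Perm (Fin (2*j))) (β : Equiv.Perm (Fin (2*(n-j))))
    (hα : ∀ a b, α a < α b ↔ σ (emb1 hj a) < σ (emb1 hj b))
    (hβ : ∀ a b, β a < β b ↔ σ (emb2 hj a) < σ (emb2 hj b)) :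
    IsDownUp σ ↔ (IsDownUp α ∧ IsUpDown β) := by
  rw [isDownUp_nat, isDownUp_nat, isUpDown_nat]
  constructor
  · intro h
    constructor
    · intro i h1
      have h2 := h i (by omega)
      by_cases hp : i % 2 = 0
      · rw [if_pos hp] at h2 ⊢
        rw [hα ⟨i+1, h1⟩ ⟨i, Nat.lt_of_succ_lt h1⟩]
        exact h2
      · rw [if_neg hp] at h2 ⊢
        rw [hα ⟨i, Nat.lt_of_succ_lt h1⟩ ⟨i+1, h1⟩]
        exact h2
    · intro i h1
      have h2 := h (2*j+1+i) (by omega)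
      by_cases hp : i % 2 = 0
      · rw [if_pos hp]
        rw [if_neg (by omega : ¬ (2*j+1+i) % 2 = 0)] at h2
        rw [hβ ⟨i, Nat.lt_of_succ_lt h1⟩ ⟨i+1, h1⟩]
        exact h2
      · rw [if_neg hp]
        rw [if_pos (by omega : (2*j+1+i) % 2 = 0)] at h2
        rw [hβ ⟨i+1, h1⟩ ⟨i, Nat.lt_of_succ_lt h1⟩]
        exact h2
  · rintro ⟨ha, hb⟩ i h1
    rcases lt_trichotomy (i+1) (2*j) with hlt | heq | hgt
    · have h2 := ha i hlt
      by_cases hp : i % 2 = 0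
      · rw [if_pos hp] at h2 ⊢
        rw [hα ⟨i+1, hlt⟩ ⟨i, Nat.lt_of_succ_lt hlt⟩] at h2
        exact h2
      · rw [if_neg hp] at h2 ⊢
        rw [hα ⟨i, Nat.lt_of_succ_lt hlt⟩ ⟨i+1, hlt⟩] at h2
        exact h2
    · -- i + 1 = 2*j, i odd
      have hp : ¬ i % 2 = 0 := by omega
      rw [if_neg hp]
      have : (⟨i+1, h1⟩ : Fin (2*n+1)) = pivot hj := by
        apply Fin.ext; simp [pivot]; omega
      rw [this, hσ]
      exact sigma_lt_last hj σ hσ _ (by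
        intro hc
        have := congrArg Fin.val hc
        simp [pivot] at this; omega)
    · rcases Nat.lt_or_ge i (2*j+1) with hi2 | hi2
      · -- i = 2*j, even
        have hi : i = 2*j := by omega
        have hp : i % 2 = 0 := by omega
        rw [if_pos hp]
        have : (⟨i, Nat.lt_of_succ_lt h1⟩ : Fin (2*n+1)) = pivot hj := by
          apply Fin.ext; simp [pivot]; omega
        rw [this, hσ]
        exact sigma_lt_last hj σ hσ _ (by
          intro hc
          have := congrArg Fin.val hc
          simp [pivot] at this; omega)
      · -- i ≥ 2*j+1
        obtain ⟨a, rfl⟩ : ∃ a, i = 2*j+1+a := ⟨i - (2*j+1), by omega⟩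
        have ha1 : a + 1 < 2*(n-j) := by omega
        have h2 := hb a ha1
        by_cases hp : a % 2 = 0
        · rw [if_pos hp] at h2
          rw [if_neg (by omega : ¬ (2*j+1+a) % 2 = 0)]
          rw [hβ ⟨a, Nat.lt_of_succ_lt ha1⟩ ⟨a+1, ha1⟩] at h2
          exact h2
        · rw [if_neg hp] at h2
          rw [if_pos (by omega : (2*j+1+a) % 2 = 0)]
          rw [hβ ⟨a+1, ha1⟩ ⟨a, Nat.lt_of_succ_lt ha1⟩] at h2
          exact h2

end Split
section Split2
variable {n j : ℕ}

lemma emb1_inj (hj : j ≤ n) : Function.Injective (emb1 hj) := by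
  intro a b hab
  have h2 : (emb1 hj a).val = (emb1 hj b).val := congrArg Fin.val hab
  exact Fin.ext h2

lemma emb2_inj (hj : j ≤ n) : Function.Injective (emb2 hj) := by
  intro a b hab
  have := congrArg Fin.val hab
  simp only [emb2] at this
  exact Fin.ext (by omega)

lemma mmp_split (hj : j ≤ n) (σ : Equiv.Perm (Fin (2*n+1)))
    (hσ : σ (pivot hj) = Fin.last (2*n))
    (β : Equiv.Perm (Fin (2*(n-j))))
    (hβ : ∀ a b, β a < β b ↔ σ (emb2 hj a) < σ (emb2 hj b)) :
    mmp1000 σ = 2*j + mmp1000 β := by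
  classical
  unfold mmp1000
  have hfilter : (univ.filter (fun i : Fin (2*n+1) => ∃ j', i < j' ∧ σ i < σ j'))
      = (univ.filter (fun i : Fin (2*n+1) => i.val < 2*j))
        ∪ (univ.filter (fun i : Fin (2*n+1) => 2*j < i.val ∧ ∃ j', i < j' ∧ σ i < σ j')) := by
    ext x
    simp only [Finset.mem_filter, Finset.mem_union, Finset.mem_univ, true_and]
    constructor
    · rintro ⟨j', hj', hlt⟩
      rcases lt_trichotomy x.val (2*j) with h | h | h
      · exact Or.inl h
      · exfalso
        have hx : x = pivot hj := Fin.ext h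
        rw [hx, hσ] at hlt
        exact absurd (Fin.le_last (σ j')) (not_le_of_gt hlt)
      · exact Or.inr ⟨h, j', hj', hlt⟩
    · rintro (h | ⟨_, rest⟩)
      · refine ⟨pivot hj, ?_, ?_⟩
        · simpa [Fin.lt_def, pivot] using h
        · rw [hσ]
          exact sigma_lt_last hj σ hσ x (fun hc => by
            rw [hc] at h; simp [pivot] at h)
      · exact rest
  rw [hfilter, Finset.card_union_of_disjoint (by
    rw [Finset.disjoint_left]
    intro x hx hx'
    simp only [Finset.mem_filter] at hx hx'
    omega)]
  congr 1
  · have he : (univ.filter (fun i : Fin (2*n+1) => i.val < 2*j))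
        = Finset.map ⟨emb1 hj, emb1_inj hj⟩ univ := by
      ext x
      simp only [Finset.mem_filter, Finset.mem_univ, true_and, Finset.mem_map,
        Function.Embedding.coeFn_mk]
      constructor
      · intro h; exact ⟨⟨x.val, h⟩, Fin.ext rfl⟩
      · rintro ⟨a, rfl⟩; exact a.isLt
    rw [he, Finset.card_map, Finset.card_univ, Fintype.card_fin]
  · refine (Finset.card_bij (fun a _ => emb2 hj a) ?_ ?_ ?_).symm
    · intro a ha
      simp only [Finset.mem_filter, Finset.mem_univ, true_and] at ha ⊢
      obtain ⟨b, hab, hlt⟩ := ha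
      refine ⟨by simp only [emb2]; omega, emb2 hj b, ?_, (hβ a b).mp hlt⟩
      simp only [Fin.lt_def, emb2]
      have := (Fin.lt_def).mp hab
      omega
    · intro a _ b _ hab; exact emb2_inj hj hab
    · intro x hx
      simp only [Finset.mem_filter, Finset.mem_univ, true_and] at hx
      obtain ⟨hgt, j', hj', hlt⟩ := hx
      have hxlt := x.isLt
      have hjlt := j'.isLt
      have hj'gt : 2*j < j'.val := lt_trans hgt ((Fin.lt_def).mp hj')
      refine ⟨⟨x.val - (2*j+1), by omega⟩, ?_, ?_⟩
      · simp only [Finset.mem_filter, Finset.mem_univ, true_and]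
        refine ⟨⟨j'.val - (2*j+1), by omega⟩, ?_, ?_⟩
        · simp only [Fin.lt_def]
          have := (Fin.lt_def).mp hj'
          omega
        · rw [hβ]
          have h1 : emb2 hj ⟨x.val - (2*j+1), by omega⟩ = x := Fin.ext (by simp [emb2]; omega)
          have h2 : emb2 hj ⟨j'.val - (2*j+1), by omega⟩ = j' := Fin.ext (by simp [emb2]; omega)
          rw [h1, h2]; exact hlt
      · exact Fin.ext (by simp [emb2]; omega)

end Split2
lemma permComplement_apply {m : ℕ} (σ : Equiv.Perm (Fin m)) (i : Fin m) :
    permComplement σ i = (σ i).rev := rfl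

lemma permComplement_involutive {m : ℕ} (σ : Equiv.Perm (Fin m)) :
    permComplement (permComplement σ) = σ := by
  ext i
  simp [permComplement_apply, Fin.rev_rev]

lemma isDownUp_complement_iff {m : ℕ} (σ : Equiv.Perm (Fin m)) :
    IsDownUp (permComplement σ) ↔ IsUpDown σ := by
  unfold IsDownUp IsUpDown
  apply forall_congr'; intro i; apply forall_congr'; intro h1
  by_cases hp : (i:ℕ) % 2 = 0
  · rw [if_pos hp, if_pos hp]
    simp only [permComplement_apply]
    exact Fin.rev_lt_rev
  · rw [if_neg hp, if_neg hp]
    simp only [permComplement_apply]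
    exact Fin.rev_lt_rev

lemma isUpDown_complement_iff {m : ℕ} (σ : Equiv.Perm (Fin m)) :
    IsUpDown (permComplement σ) ↔ IsDownUp σ := by
  rw [← isDownUp_complement_iff (permComplement σ), permComplement_involutive]

lemma du_card_eq_ud (m : ℕ) : (DUset m).card = (UDset m).card := by
  classical
  apply Finset.card_bij (fun σ _ => permComplement σ)
  · intro σ hσ
    simp only [DUset, UDset, Finset.mem_filter, Finset.mem_univ, true_and] at hσ ⊢
    exact (isUpDown_complement_iff σ).mpr hσ
  · intro a _ b _ hab
    have := congrArg permComplement hab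
    rwa [permComplement_involutive, permComplement_involutive] at this
  · intro τ hτ
    simp only [DUset, UDset, Finset.mem_filter, Finset.mem_univ, true_and] at hτ ⊢
    exact ⟨permComplement τ, (isDownUp_complement_iff τ).mpr hτ, permComplement_involutive τ⟩

lemma pivot_even {n : ℕ} (σ : Equiv.Perm (Fin (2*n+1))) (hdu : IsDownUp σ) :
    (σ.symm (Fin.last (2*n))).val % 2 = 0 := by
  by_contra hodd
  set p := σ.symm (Fin.last (2*n)) with hpdef
  have hple := p.isLt
  have hlt : p.val + 1 < 2*n+1 := by omega
  have h2 := (isDownUp_nat σ).mp hdu p.val hlt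
  rw [if_neg (by omega)] at h2
  have h3 : σ (⟨p.val, Nat.lt_of_succ_lt hlt⟩ : Fin (2*n+1)) = Fin.last (2*n) := by
    have he : (⟨p.val, Nat.lt_of_succ_lt hlt⟩ : Fin (2*n+1)) = p := Fin.ext rfl
    rw [he, hpdef]
    exact σ.apply_symm_apply _
  rw [h3] at h2
  exact absurd h2 (not_lt.mpr (Fin.le_last _))

lemma mmp_lower {n j' : ℕ} (hj : j' ≤ n) (σ : Equiv.Perm (Fin (2*n+1)))
    (hdu : IsDownUp σ) (hp : (σ.symm (Fin.last (2*n))).val = 2*j') :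
    n + j' ≤ mmp1000 σ := by
  classical
  unfold mmp1000
  have hσp : σ (pivot hj) = Fin.last (2*n) := by
    have : pivot hj = σ.symm (Fin.last (2*n)) := Fin.ext (by simp [pivot, hp])
    rw [this]; exact σ.apply_symm_apply _
  have hcard := Finset.card_le_card_of_injOn
    (f := fun i : Fin (n+j') =>
      (⟨if i.val < 2*j' then i.val else 2*i.val - 2*j' + 1,
        by have := i.isLt; split_ifs <;> omega⟩ : Fin (2*n+1)))
    (s := Finset.univ)
    (t := Finset.univ.filter (fun i : Fin (2*n+1) => ∃ j'', i < j'' ∧ σ i < σ j''))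
    ?_ ?_
  · simpa using hcard
  · intro i _
    simp only [Finset.coe_filter, Set.mem_setOf_eq, Finset.mem_coe, Finset.mem_filter, Finset.mem_univ, true_and]
    by_cases hc : i.val < 2*j'
    · refine ⟨pivot hj, ?_, ?_⟩
      · simp only [Fin.lt_def, pivot]
        rw [if_pos hc]; omega
      · rw [hσp]
        apply sigma_lt_last hj σ hσp
        intro hcon
        have := congrArg Fin.val hcon
        simp only [pivot] at this
        rw [if_pos hc] at this; omega
    · have hi := i.isLt
      have hq1 : (2*i.val - 2*j' + 1) + 1 < 2*n+1 := by omega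
      have h2 := (isDownUp_nat σ).mp hdu (2*i.val - 2*j' + 1) hq1
      rw [if_neg (by omega)] at h2
      refine ⟨⟨2*i.val - 2*j' + 1 + 1, hq1⟩, ?_, ?_⟩
      · simp only [Fin.lt_def]
        rw [if_neg hc]; omega
      · have hfe : (⟨if i.val < 2*j' then i.val else 2*i.val - 2*j' + 1, by
            have := i.isLt; split_ifs <;> omega⟩ : Fin (2*n+1))
            = ⟨2*i.val - 2*j' + 1, Nat.lt_of_succ_lt hq1⟩ := Fin.ext (by simp only; rw [if_neg hc])
        rw [hfe]
        exact h2
  · intro a _ b _ hab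
    have := congrArg Fin.val hab
    simp only at this
    apply Fin.ext
    split_ifs at this <;> omega
section Fiber

variable {n j : ℕ}

lemma prefix_ne_last (hj : j ≤ n) (σ : Equiv.Perm (Fin (2*n+1)))
    (hσ : σ (pivot hj) = Fin.last (2*n)) (a : Fin (2*j)) :
    σ (emb1 hj a) ≠ Fin.last (2*n) := by
  intro hc
  have h1 := σ.injective (hc.trans hσ.symm)
  have h2 := congrArg Fin.val h1
  simp only [emb1, pivot] at h2
  have := a.isLt; omega

lemma suffix_ne_last (hj : j ≤ n) (σ : Equiv.Perm (Fin (2*n+1)))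
    (hσ : σ (pivot hj) = Fin.last (2*n)) (a : Fin (2*(n-j))) :
    σ (emb2 hj a) ≠ Fin.last (2*n) := by
  intro hc
  have h1 := σ.injective (hc.trans hσ.symm)
  have h2 := congrArg Fin.val h1
  simp only [emb2, pivot] at h2
  omega

lemma prefix_image_subset (hj : j ≤ n) (σ : Equiv.Perm (Fin (2*n+1)))
    (hσ : σ (pivot hj) = Fin.last (2*n)) :
    Finset.univ.image (fun a => σ (emb1 hj a)) ⊆
      (Finset.univ : Finset (Fin (2*n+1))).erase (Fin.last (2*n)) := by
  intro y hy
  simp only [Finset.mem_image, Finset.mem_univ, true_and] at hy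
  obtain ⟨a, rfl⟩ := hy
  exact Finset.mem_erase.mpr ⟨prefix_ne_last hj σ hσ a, Finset.mem_univ _⟩

lemma suffix_image_eq (hj : j ≤ n) (σ : Equiv.Perm (Fin (2*n+1)))
    (hσ : σ (pivot hj) = Fin.last (2*n)) :
    Finset.univ.image (fun a => σ (emb2 hj a)) =
      ((Finset.univ : Finset (Fin (2*n+1))).erase (Fin.last (2*n))) \
        (Finset.univ.image (fun a => σ (emb1 hj a))) := by
  apply Finset.eq_of_subset_of_card_le
  · intro y hy
    simp only [Finset.mem_image, Finset.mem_univ, true_and] at hy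
    obtain ⟨a, rfl⟩ := hy
    rw [Finset.mem_sdiff]
    refine ⟨Finset.mem_erase.mpr ⟨suffix_ne_last hj σ hσ a, Finset.mem_univ _⟩, ?_⟩
    intro hc
    simp only [Finset.mem_image, Finset.mem_univ, true_and] at hc
    obtain ⟨b, hb⟩ := hc
    have h1 := congrArg Fin.val (σ.injective hb)
    simp only [emb1, emb2] at h1
    have := b.isLt; omega
  · rw [Finset.card_sdiff_of_subset (prefix_image_subset hj σ hσ),
      Finset.card_erase_of_mem (Finset.mem_univ _), Finset.card_univ, Fintype.card_fin,
      image_card_of_inj (fun a => σ (emb1 hj a)) (σ.injective.comp (emb1_inj hj)),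
      image_card_of_inj (fun a => σ (emb2 hj a)) (σ.injective.comp (emb2_inj hj))]
    omega

end Fiber
open scoped Classical in
lemma fiber_card (n k j : ℕ) (hjk : j ≤ k) (hkn : k + 1 ≤ n) :
    ((DUset (2*n+1)).filter (fun σ =>
        mmp1000 σ = n + k ∧ (σ.symm (Fin.last (2*n))).val = 2*j)).card
      = Nat.choose (2*n) (2*j) * (udCount (2*j) * AcountEq (n-j) (n+k-2*j)) := by
  have hj : j ≤ n := by omega
  have key : ((DUset (2*n+1)).filter (fun σ =>
        mmp1000 σ = n + k ∧ (σ.symm (Fin.last (2*n))).val = 2*j)).card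
      = ((Finset.powersetCard (2*j)
            ((Finset.univ : Finset (Fin (2*n+1))).erase (Fin.last (2*n)))) ×ˢ
         ((DUset (2*j)) ×ˢ
          ((UDset (2*(n-j))).filter (fun τ => mmp1000 τ = n+k-2*j)))).card := by
    apply Finset.card_bij (fun σ _ =>
      (Finset.univ.image (fun a => σ (emb1 hj a)),
       mkPattern (fun a => σ (emb1 hj a)) (σ.injective.comp (emb1_inj hj)),
       mkPattern (fun a => σ (emb2 hj a)) (σ.injective.comp (emb2_inj hj))))
    · -- maps into the product
      intro σ hσ
      simp only [Finset.mem_filter, DUset, Finset.mem_univ, true_and] at hσ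
      obtain ⟨hdu, hmmp, hpv⟩ := hσ
      have hσp : σ (pivot hj) = Fin.last (2*n) := by
        have hpe : pivot hj = σ.symm (Fin.last (2*n)) := Fin.ext (by simp [pivot, hpv])
        rw [hpe]; exact σ.apply_symm_apply _
      have hα := mkPattern_lt_iff (fun a => σ (emb1 hj a)) (σ.injective.comp (emb1_inj hj))
      have hβ := mkPattern_lt_iff (fun a => σ (emb2 hj a)) (σ.injective.comp (emb2_inj hj))
      have hsplit := (du_split hj σ hσp _ _ hα hβ).mp hdu
      have hm := mmp_split hj σ hσp _ hβ
      rw [Finset.mem_product]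
      refine ⟨?_, ?_⟩
      · rw [Finset.mem_powersetCard]
        exact ⟨prefix_image_subset hj σ hσp,
          image_card_of_inj (fun a => σ (emb1 hj a)) (σ.injective.comp (emb1_inj hj))⟩
      · rw [Finset.mem_product]
        constructor
        · simp only [DUset, Finset.mem_filter, Finset.mem_univ, true_and]
          exact hsplit.1
        · simp only [UDset, Finset.mem_filter, Finset.mem_univ, true_and]
          exact ⟨hsplit.2, by omega⟩
    · -- injective
      intro σ hσ τ hτ heq
      simp only [Finset.mem_filter, DUset, Finset.mem_univ, true_and] at hσ hτ
      obtain ⟨hduσ, hmmpσ, hpvσ⟩ := hσ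
      obtain ⟨hduτ, hmmpτ, hpvτ⟩ := hτ
      have hσp : σ (pivot hj) = Fin.last (2*n) := by
        have hpe : pivot hj = σ.symm (Fin.last (2*n)) := Fin.ext (by simp [pivot, hpvσ])
        rw [hpe]; exact σ.apply_symm_apply _
      have hτp : τ (pivot hj) = Fin.last (2*n) := by
        have hpe : pivot hj = τ.symm (Fin.last (2*n)) := Fin.ext (by simp [pivot, hpvτ])
        rw [hpe]; exact τ.apply_symm_apply _
      simp only [Prod.mk.injEq] at heq
      obtain ⟨hS, hα, hβ⟩ := heq
      apply Equiv.ext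
      intro x
      rcases Nat.lt_trichotomy x.val (2*j) with h | h | h
      · have hx : x = emb1 hj ⟨x.val, h⟩ := Fin.ext rfl
        rw [hx]
        have e1 := mkPattern_eval (fun a => σ (emb1 hj a))
          (σ.injective.comp (emb1_inj hj)) ⟨x.val, h⟩
        have e2 := mkPattern_eval (fun a => τ (emb1 hj a))
          (τ.injective.comp (emb1_inj hj)) ⟨x.val, h⟩
        rw [← e1, ← e2, hα]
        exact orderIsoOfFin_congr _ _ hS _
      · have hx : x = pivot hj := Fin.ext h
        rw [hx, hσp, hτp]
      · have hxlt := x.isLt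
        have hxb : x.val - (2*j+1) < 2*(n-j) := by omega
        have hx : x = emb2 hj ⟨x.val - (2*j+1), hxb⟩ :=
          Fin.ext (by simp only [emb2]; omega)
        rw [hx]
        have e1 := mkPattern_eval (fun a => σ (emb2 hj a))
          (σ.injective.comp (emb2_inj hj)) ⟨x.val - (2*j+1), hxb⟩
        have e2 := mkPattern_eval (fun a => τ (emb2 hj a))
          (τ.injective.comp (emb2_inj hj)) ⟨x.val - (2*j+1), hxb⟩
        rw [← e1, ← e2, hβ]
        apply orderIsoOfFin_congr
        rw [suffix_image_eq hj σ hσp, suffix_image_eq hj τ hτp, hS]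
    · -- surjective
      rintro ⟨S, α, β⟩ ht
      rw [Finset.mem_product] at ht
      obtain ⟨hSm, ht2⟩ := ht
      rw [Finset.mem_product] at ht2
      obtain ⟨hαm, hβm⟩ := ht2
      rw [Finset.mem_powersetCard] at hSm
      obtain ⟨hSsub, hScard⟩ := hSm
      simp only [DUset, Finset.mem_filter, Finset.mem_univ, true_and] at hαm
      simp only [UDset, Finset.mem_filter, Finset.mem_univ, true_and] at hβm
      obtain ⟨hβud, hβmmp⟩ := hβm
      have hTcard : (((Finset.univ : Finset (Fin (2*n+1))).erase (Fin.last (2*n))) \ S).card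
          = 2*(n-j) := by
        rw [Finset.card_sdiff_of_subset hSsub, Finset.card_erase_of_mem (Finset.mem_univ _),
          Finset.card_univ, Fintype.card_fin, hScard]
        omega
      set eS := S.orderIsoOfFin hScard with heS
      set eT := (((Finset.univ : Finset (Fin (2*n+1))).erase (Fin.last (2*n))) \ S).orderIsoOfFin
        hTcard with heT
      have heSm : ∀ u, (eS u : Fin (2*n+1)) ∈ S := fun u => (eS u).2
      have heTm : ∀ u, (eT u : Fin (2*n+1)) ∈
          (((Finset.univ : Finset (Fin (2*n+1))).erase (Fin.last (2*n))) \ S) :=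
        fun u => (eT u).2
      have hSne : ∀ u, (eS u : Fin (2*n+1)) ≠ Fin.last (2*n) :=
        fun u => (Finset.mem_erase.mp (hSsub (heSm u))).1
      have hTne : ∀ u, (eT u : Fin (2*n+1)) ≠ Fin.last (2*n) :=
        fun u => (Finset.mem_erase.mp (Finset.mem_sdiff.mp (heTm u)).1).1
      have hTnS : ∀ u, (eT u : Fin (2*n+1)) ∉ S := fun u => (Finset.mem_sdiff.mp (heTm u)).2
      set f : Fin (2*n+1) → Fin (2*n+1) := fun x =>
        if hc : x.val < 2*j then (eS (α ⟨x.val, hc⟩) : Fin (2*n+1))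
        else if hc2 : x.val = 2*j then Fin.last (2*n)
        else (eT (β ⟨x.val - (2*j+1), by have := x.isLt; omega⟩) : Fin (2*n+1)) with hf
      have hfinj : Function.Injective f := by
        intro x y hxy
        rw [hf] at hxy
        dsimp only at hxy
        by_cases hx1 : x.val < 2*j <;> by_cases hy1 : y.val < 2*j
        · rw [dif_pos hx1, dif_pos hy1] at hxy
          have h1 := α.injective (eS.injective (Subtype.coe_injective hxy))
          have h2 := congrArg Fin.val h1
          exact Fin.ext h2
        · rw [dif_pos hx1] at hxy
          by_cases hy2 : y.val = 2*j
          · rw [dif_neg hy1, dif_pos hy2] at hxy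
            exact absurd hxy (hSne _)
          · rw [dif_neg hy1, dif_neg hy2] at hxy
            exact absurd (hxy ▸ heSm _) (hTnS _)
        · rw [dif_pos hy1] at hxy
          by_cases hx2 : x.val = 2*j
          · rw [dif_neg hx1, dif_pos hx2] at hxy
            exact absurd hxy.symm (hSne _)
          · rw [dif_neg hx1, dif_neg hx2] at hxy
            exact absurd (hxy ▸ heSm _) (hTnS _)
        · by_cases hx2 : x.val = 2*j <;> by_cases hy2 : y.val = 2*j
          · exact Fin.ext (by omega)
          · rw [dif_neg hx1, dif_pos hx2, dif_neg hy1, dif_neg hy2] at hxy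
            exact absurd hxy.symm (hTne _)
          · rw [dif_neg hx1, dif_neg hx2, dif_neg hy1, dif_pos hy2] at hxy
            exact absurd hxy (hTne _)
          · rw [dif_neg hx1, dif_neg hx2, dif_neg hy1, dif_neg hy2] at hxy
            have h1 := β.injective (eT.injective (Subtype.coe_injective hxy))
            have h2 := congrArg Fin.val h1
            simp only at h2
            have := x.isLt; have := y.isLt
            exact Fin.ext (by omega)
      set σ := Equiv.ofBijective f (Finite.injective_iff_bijective.mp hfinj) with hσdef
      have hσapp : ∀ x, σ x = f x := fun x => rfl
      have hfpiv : σ (pivot hj) = Fin.last (2*n) := by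
        rw [hσapp, hf]
        dsimp only
        rw [dif_neg (by simp [pivot]), dif_pos (show (pivot hj).val = 2*j from rfl)]
      have hfe1 : ∀ a : Fin (2*j), σ (emb1 hj a) = (eS (α a) : Fin (2*n+1)) := by
        intro a
        rw [hσapp, hf]
        dsimp only
        rw [dif_pos (show (emb1 hj a).val < 2*j from a.isLt)]
        exact congrArg (fun u : Fin (2*j) => ((eS (α u) : Fin (2*n+1)))) (Fin.ext rfl)
      have hfe2 : ∀ a : Fin (2*(n-j)), σ (emb2 hj a) = (eT (β a) : Fin (2*n+1)) := by
        intro a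
        rw [hσapp, hf]
        dsimp only
        rw [dif_neg (by simp only [emb2]; omega), dif_neg (by simp only [emb2]; omega)]
        have he : (emb2 hj a).val - (2*j+1) = a.val := by simp only [emb2]; omega
        simp only [he, Fin.eta]
      have hαrel : ∀ a b, α a < α b ↔ σ (emb1 hj a) < σ (emb1 hj b) := by
        intro a b
        rw [hfe1, hfe1, Subtype.coe_lt_coe, eS.lt_iff_lt]
      have hβrel : ∀ a b, β a < β b ↔ σ (emb2 hj a) < σ (emb2 hj b) := by
        intro a b
        rw [hfe2, hfe2, Subtype.coe_lt_coe, eT.lt_iff_lt]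
      refine ⟨σ, ?_, ?_⟩
      · simp only [Finset.mem_filter, DUset, Finset.mem_univ, true_and]
        refine ⟨(du_split hj σ hfpiv α β hαrel hβrel).mpr ⟨hαm, hβud⟩, ?_, ?_⟩
        · rw [mmp_split hj σ hfpiv β hβrel, hβmmp]; omega
        · have hsymm : σ.symm (Fin.last (2*n)) = pivot hj := by
            rw [← hfpiv]; exact σ.symm_apply_apply _
          rw [hsymm]
          simp [pivot]
      · have hS' : Finset.univ.image (fun a => σ (emb1 hj a)) = S := by
          apply Finset.eq_of_subset_of_card_le
          · intro y hy
            simp only [Finset.mem_image, Finset.mem_univ, true_and] at hy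
            obtain ⟨a, rfl⟩ := hy
            rw [hfe1]; exact heSm _
          · rw [image_card_of_inj (fun a => σ (emb1 hj a))
              (σ.injective.comp (emb1_inj hj)), hScard]
        simp only [Prod.mk.injEq]
        refine ⟨hS', ?_, ?_⟩
        · apply perm_eq_of_lt_iff
          intro a b
          rw [mkPattern_lt_iff]
          exact (hαrel a b).symm
        · apply perm_eq_of_lt_iff
          intro a b
          rw [mkPattern_lt_iff]
          exact (hβrel a b).symm
  rw [key, Finset.card_product, Finset.card_product, Finset.card_powersetCard,
    Finset.card_erase_of_mem (Finset.mem_univ _), Finset.card_univ, Fintype.card_fin]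
  have h1 : 2*n+1-1 = 2*n := by omega
  rw [h1, du_card_eq_ud]
  rfl
theorem stmt19 (n k : ℕ) (hn : k + 1 ≤ n) :
    DcountEq n (n + k) = ∑ j ∈ Finset.range (k + 1),
      Nat.choose (2 * n) (2 * j) * udCount (2 * j) *
        AcountEq (n - j) (n + k - 2 * j) := by
  classical
  have hD : DcountEq n (n + k)
      = ((DUset (2*n+1)).filter (fun σ => mmp1000 σ = n + k)).card := rfl
  have hmap : ∀ σ ∈ (DUset (2*n+1)).filter (fun σ => mmp1000 σ = n + k),
      (σ.symm (Fin.last (2*n))).val / 2 ∈ Finset.range (k+1) := by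
    intro σ hσ
    simp only [Finset.mem_filter, DUset, Finset.mem_univ, true_and] at hσ
    obtain ⟨hdu, hmmp⟩ := hσ
    rw [Finset.mem_range]
    have hev := pivot_even σ hdu
    have hple : ((σ.symm (Fin.last (2*n))).val) < 2*n+1 := (σ.symm _).isLt
    have hj' : (σ.symm (Fin.last (2*n))).val = 2*((σ.symm (Fin.last (2*n))).val/2) := by omega
    have hjn : (σ.symm (Fin.last (2*n))).val/2 ≤ n := by omega
    have hlow := mmp_lower hjn σ hdu hj'
    omega
  rw [hD, Finset.card_eq_sum_card_fiberwise hmap]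
  apply Finset.sum_congr rfl
  intro j hjm
  rw [Finset.mem_range] at hjm
  have hjk : j ≤ k := by omega
  have heq : ((DUset (2*n+1)).filter (fun σ => mmp1000 σ = n + k)).filter
      (fun σ => (σ.symm (Fin.last (2*n))).val / 2 = j)
      = (DUset (2*n+1)).filter (fun σ =>
          mmp1000 σ = n + k ∧ (σ.symm (Fin.last (2*n))).val = 2*j) := by
    rw [Finset.filter_filter]
    apply Finset.filter_congr
    intro σ hσ
    have hdu : IsDownUp σ := by simpa [DUset] using hσ
    have hev := pivot_even σ hdu
    constructor
    · rintro ⟨h1, h2⟩; exact ⟨h1, by omega⟩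
    · rintro ⟨h1, h2⟩; exact ⟨h1, by omega⟩
  rw [heq, fiber_card n k j hjk hn]
  exact (mul_assoc _ _ _).symm
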